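/- Let T be a simple graph which is a tree (connected and acyclic), let (Γ_v) be a family of sets indexed by the vertices of T, and for every ordered pair (u, v) of adjacent vertices of T let φ_{u,v} be a partial bijection from Γ_u to Γ_v (a PartialEquiv) such that φ_{v,u} = (φ_{u,v}).symm for all adjacent u, v. Define a simple graph F on the vertex set Σ v, Γ_v by declaring (u, x) adjacent to (v, y) if and only if u and v are adjacent in T, x lies in the source of φ_{u,v}, and φ_{u,v}(x) = y. Then F is acyclic; in particular every connected component of F is a tree, i.e., F is a forest. -/

import Mathlib

/-- Let `T` be a tree, `(Γ v)` a family of sets indexed by the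
vertices of `T`, and for every ordered pair of adjacent vertices `u, v` a
partial bijection `φ u v : Γ u → Γ v` with `φ v u = (φ u v).symm`.  Then the
graph `F` on `Σ v, Γ v` in which `(u, x)` and `(v, y)` are adjacent iff `u, v`
are adjacent in `T`, `x ∈ (φ u v).source` and `φ u v x = y`, is acyclic, i.e.
`F` is a forest. -/
theorem forest_of_tree_of_partial_isos {V : Type*} (T : SimpleGraph V)
    (hT : T.IsTree) (Γ : V → Type*)
    (φ : ∀ u v : V, T.Adj u v → PartialEquiv (Γ u) (Γ v))
    (hsymm : ∀ (u v : V) (h : T.Adj u v), φ v u h.symm = (φ u v h).symm)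
    (F : SimpleGraph (Σ v : V, Γ v))
    (hF : ∀ p q : Σ v : V, Γ v, F.Adj p q ↔
      ∃ h : T.Adj p.1 q.1, p.2 ∈ (φ p.1 q.1 h).source ∧ φ p.1 q.1 h p.2 = q.2) :
    F.IsAcyclic := by
  classical
  -- projection graph homomorphism
  have hadjT : ∀ {p q : Σ v : V, Γ v}, F.Adj p q → T.Adj p.1 q.1 := by
    intro p q h
    obtain ⟨h', -, -⟩ := (hF p q).mp h
    exact h'
  let π : F →g T := ⟨Sigma.fst, fun {p q} h => hadjT h⟩
  -- local injectivity: a neighbor of `p` is determined by its first component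
  have hdet : ∀ (p q₁ q₂ : Σ v : V, Γ v), F.Adj p q₁ → F.Adj p q₂ →
      q₁.1 = q₂.1 → q₁ = q₂ := by
    rintro ⟨u, x⟩ ⟨v₁, y₁⟩ ⟨v₂, y₂⟩ h₁ h₂ h12
    obtain ⟨ha₁, hs₁, he₁⟩ := (hF _ _).mp h₁
    obtain ⟨ha₂, hs₂, he₂⟩ := (hF _ _).mp h₂
    dsimp at h12 ha₁ ha₂ hs₁ hs₂ he₁ he₂
    subst h12
    have : y₁ = y₂ := by rw [← he₁, ← he₂]
    subst this
    rfl
  -- any path in `F` projects to a path in `T`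
  have hmapPath : ∀ {a b : Σ v : V, Γ v} (w : F.Walk a b), w.IsPath →
      (w.map π).IsPath := by
    intro a b w
    induction w with
    | nil => intro _; simp
    | @cons p q r h w' ih =>
      intro hp
      rw [SimpleGraph.Walk.cons_isPath_iff] at hp
      obtain ⟨hp', hpn⟩ := hp
      rw [SimpleGraph.Walk.map_cons, SimpleGraph.Walk.cons_isPath_iff]
      refine ⟨ih hp', ?_⟩
      intro hmem
      -- `p.1` occurs in the projection of `w'`
      cases w' with
      | nil =>
        simp [SimpleGraph.Walk.support_map] at hmem
        exact (hadjT h).ne hmem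
      | @cons _ z _ hqz w'' =>
        -- the closed walk `p.1 → q.1 → ... → p.1` would give a cycle
        have hQ' : ((SimpleGraph.Walk.cons hqz w'').map π).IsPath := ih hp'
        set Q' := (SimpleGraph.Walk.cons hqz w'').map π with hQ'def
        have ht : (Q'.takeUntil p.1 hmem).IsPath := hQ'.takeUntil hmem
        have hnc := hT.IsAcyclic (SimpleGraph.Walk.cons (hadjT h) (Q'.takeUntil p.1 hmem))
        rw [SimpleGraph.Walk.cons_isCycle_iff] at hnc
        push_neg at hnc
        have hedge : s(p.1, q.1) ∈ Q'.edges :=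
          SimpleGraph.Walk.edges_takeUntil_subset _ hmem (hnc ht)
        rw [hQ'def, SimpleGraph.Walk.map_cons, SimpleGraph.Walk.edges_cons] at hedge
        rcases List.mem_cons.mp hedge with hhead | htail
        · -- the edge is the first edge of the projection of `w'`
          have hz1 : p.1 = z.1 := by
            rcases Sym2.eq_iff.mp hhead with ⟨h1, h2⟩ | ⟨h1, h2⟩
            · exact absurd h1 (hadjT h).ne
            · exact h1
          have : z = p := hdet q z p hqz h.symm hz1.symm
          subst this
          exact hpn (by
            rw [SimpleGraph.Walk.support_cons]
            exact List.mem_cons_of_mem _ w''.start_mem_support)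
        · -- otherwise `q.1` would repeat in the projection of `w'`
          have : q.1 ∈ (w''.map π).support :=
            SimpleGraph.Walk.snd_mem_support_of_mem_edges _ htail
          rw [hQ'def, SimpleGraph.Walk.map_cons, SimpleGraph.Walk.cons_isPath_iff] at hQ'
          exact hQ'.2 this
  -- an `F`-walk is determined by its projection
  have hinj : ∀ {a b : Σ v : V, Γ v} (w₁ w₂ : F.Walk a b),
      w₁.map π = w₂.map π → w₁ = w₂ := by
    intro a b w₁
    induction w₁ with
    | nil =>
      intro w₂ hw
      cases w₂ with
      | nil => rfl
      | cons h w' =>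
        exfalso
        have := congrArg SimpleGraph.Walk.length hw
        simp [SimpleGraph.Walk.length_map] at this
    | @cons p q₁ r h₁ w₁' ih =>
      intro w₂ hw
      cases w₂ with
      | nil =>
        exfalso
        have := congrArg SimpleGraph.Walk.length hw
        simp [SimpleGraph.Walk.length_map] at this
      | @cons _ q₂ _ h₂ w₂' =>
        have hsupp := congrArg SimpleGraph.Walk.support hw
        rw [SimpleGraph.Walk.map_cons, SimpleGraph.Walk.map_cons,
          SimpleGraph.Walk.support_cons, SimpleGraph.Walk.support_cons] at hsupp
        have hq1 : q₁.1 = q₂.1 := by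
          have := (List.cons.injEq _ _ _ _).mp hsupp |>.2
          rw [SimpleGraph.Walk.support_map, SimpleGraph.Walk.support_map] at this
          cases w₁' <;> cases w₂' <;> simpa [π] using (List.cons.injEq _ _ _ _).mp this |>.1
        have hq : q₁ = q₂ := hdet p q₁ q₂ h₁ h₂ hq1
        subst hq
        rw [SimpleGraph.Walk.map_cons, SimpleGraph.Walk.map_cons] at hw
        have hw' : w₁'.map π = w₂'.map π := by
          simpa using hw
        rw [ih w₂' hw']
  -- conclude via uniqueness of paths
  apply SimpleGraph.isAcyclic_of_path_unique
  intro a b P Q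
  have hP : ((P : F.Walk a b).map π).IsPath := hmapPath _ P.2
  have hQ : ((Q : F.Walk a b).map π).IsPath := hmapPath _ Q.2
  have := hT.IsAcyclic.path_unique ⟨_, hP⟩ ⟨_, hQ⟩
  have heq : (P : F.Walk a b).map π = (Q : F.Walk a b).map π :=
    congrArg Subtype.val this
  exact Subtype.ext (hinj _ _ heq)
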